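/- Let λ > 0, Z positive definite d×d with Z ⪰ λI, vectors x₁,…,x_n, a ∈ ℝ^d with ‖x_t‖₂ ≤ M for all t and ∑_{t=1}^n x_tᵀ Z⁻¹ x_t ≤ d, and a sequence of drifts (θ_s)_{s=1}^{n+1} in ℝ^d. Then |∑_{t=1}^{n} (aᵀ Z⁻¹ x_t) · (x_tᵀ (θ_t − θ_{n+1}))| ≤ M ‖a‖₂ √(d n / λ) · ∑_{s=1}^{n} ‖θ_s − θ_{s+1}‖₂. -/

import Mathlib

open Matrix Finset

private lemma dot_self_nonneg' {d : ℕ} (v : Fin d → ℝ) : 0 ≤ v ⬝ᵥ v :=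
  Finset.sum_nonneg fun i _ => mul_self_nonneg _

private lemma abs_dot_le {d : ℕ} (v w : Fin d → ℝ) :
    |v ⬝ᵥ w| ≤ Real.sqrt (v ⬝ᵥ v) * Real.sqrt (w ⬝ᵥ w) := by
  have h := Finset.sum_mul_sq_le_sq_mul_sq Finset.univ v w
  have h2 : (v ⬝ᵥ w) ^ 2 ≤ (v ⬝ᵥ v) * (w ⬝ᵥ w) := by
    simpa [dotProduct, sq] using h
  calc |v ⬝ᵥ w| = Real.sqrt ((v ⬝ᵥ w) ^ 2) := (Real.sqrt_sq_eq_abs _).symm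
    _ ≤ Real.sqrt ((v ⬝ᵥ v) * (w ⬝ᵥ w)) := Real.sqrt_le_sqrt h2
    _ = _ := Real.sqrt_mul (dot_self_nonneg' v) _

private lemma psd_nonneg {d : ℕ} {P : Matrix (Fin d) (Fin d) ℝ} (hP : P.PosSemidef)
    (v : Fin d → ℝ) : 0 ≤ v ⬝ᵥ P *ᵥ v := by
  have := hP.dotProduct_mulVec_nonneg v
  simpa using this

open scoped MatrixOrder in
private lemma psd_cauchy {d : ℕ} {P : Matrix (Fin d) (Fin d) ℝ} (hP : P.PosSemidef)
    (v w : Fin d → ℝ) :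
    |v ⬝ᵥ P *ᵥ w| ≤ Real.sqrt (v ⬝ᵥ P *ᵥ v) * Real.sqrt (w ⬝ᵥ P *ᵥ w) := by
  set S := CFC.sqrt P with hSdef
  have hSS : S * S = P := CFC.sqrt_mul_sqrt_self P hP.nonneg
  have hsym : Sᵀ = S := by
    have h := (CFC.sqrt_nonneg P).posSemidef.isHermitian
    rwa [Matrix.IsHermitian, Matrix.conjTranspose_eq_transpose_of_trivial] at h
  have key : ∀ u z : Fin d → ℝ, u ⬝ᵥ P *ᵥ z = (S *ᵥ u) ⬝ᵥ (S *ᵥ z) := by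
    intro u z
    rw [← hSS, ← Matrix.mulVec_mulVec, Matrix.dotProduct_mulVec, ← Matrix.mulVec_transpose,
      hsym]
  rw [key, key, key]
  exact abs_dot_le _ _

private lemma telescope_sum {d : ℕ} (g : ℕ → Fin d → ℝ) :
    ∀ n m : ℕ, m ≤ n + 1 →
      ∑ s ∈ Finset.Icc m n, (g s - g (s + 1)) = g m - g (n + 1) := by
  intro n
  induction n with
  | zero =>
    intro m hm
    interval_cases m
    · simp
    · simp
  | succ n ih =>
    intro m hm
    rcases Nat.lt_or_ge m (n + 2) with h | h
    · have hm' : m ≤ n + 1 := Nat.lt_succ_iff.mp h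
      rw [Finset.sum_Icc_succ_top hm', ih m hm']
      abel
    · have : m = n + 2 := le_antisymm hm h
      subst this
      rw [Finset.Icc_eq_empty (by omega)]
      simp

theorem drifting_term_bound (d n : ℕ) (lam M A : ℝ) (hlam : 0 < lam)
    (Z : Matrix (Fin d) (Fin d) ℝ) (hZ : Z.PosDef)
    (hlow : (Z - lam • (1 : Matrix (Fin d) (Fin d) ℝ)).PosSemidef)
    (x : ℕ → Fin d → ℝ) (a : Fin d → ℝ)
    (hx : ∀ t, Real.sqrt (x t ⬝ᵥ x t) ≤ M)
    (hsum : ∑ t ∈ Finset.Icc 1 n, x t ⬝ᵥ Z⁻¹ *ᵥ x t ≤ (d : ℝ))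
    (θ : ℕ → Fin d → ℝ) :
    |∑ t ∈ Finset.Icc 1 n,
        (a ⬝ᵥ Z⁻¹ *ᵥ x t) * (x t ⬝ᵥ (θ t - θ (n + 1)))| ≤
      M * Real.sqrt (a ⬝ᵥ a) * Real.sqrt (d * n / lam) *
        ∑ s ∈ Finset.Icc 1 n, Real.sqrt ((θ s - θ (s + 1)) ⬝ᵥ (θ s - θ (s + 1))) := by
  have hM : 0 ≤ M := le_trans (Real.sqrt_nonneg _) (hx 0)
  have hZinv : (Z⁻¹).PosDef := hZ.inv
  have hZinvPsd := hZinv.posSemidef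
  set D := ∑ s ∈ Finset.Icc 1 n, Real.sqrt ((θ s - θ (s + 1)) ⬝ᵥ (θ s - θ (s + 1))) with hD
  have hDnn : 0 ≤ D := Finset.sum_nonneg fun s _ => Real.sqrt_nonneg _
  -- bound on a ⬝ᵥ Z⁻¹ *ᵥ a
  set b := Z⁻¹ *ᵥ a with hb
  have hZb : Z *ᵥ b = a := by
    rw [hb, Matrix.mulVec_mulVec, Matrix.mul_nonsing_inv _ hZ.det_pos.ne'.isUnit, Matrix.one_mulVec]
  have hlow' : lam * (b ⬝ᵥ b) ≤ b ⬝ᵥ a := by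
    have h0 := psd_nonneg hlow b
    have : (Z - lam • (1 : Matrix (Fin d) (Fin d) ℝ)) *ᵥ b = a - lam • b := by
      rw [Matrix.sub_mulVec, Matrix.smul_mulVec, Matrix.one_mulVec, hZb]
    rw [this] at h0
    have h1 : b ⬝ᵥ (a - lam • b) = b ⬝ᵥ a - lam * (b ⬝ᵥ b) := by
      simp [dotProduct_sub, dotProduct_smul, smul_eq_mul]
    linarith [h0, h1.symm ▸ h0, h1 ▸ h0]
  have hQA : a ⬝ᵥ Z⁻¹ *ᵥ a ≤ (a ⬝ᵥ a) / lam := by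
    have hcomm : a ⬝ᵥ Z⁻¹ *ᵥ a = b ⬝ᵥ a := (dotProduct_comm _ _)
    rw [hcomm, le_div_iff₀ hlam]
    set β := Real.sqrt (b ⬝ᵥ b) with hβ
    set α := Real.sqrt (a ⬝ᵥ a) with hα
    have hβ2 : β ^ 2 = b ⬝ᵥ b := Real.sq_sqrt (dot_self_nonneg' b)
    have hα2 : α ^ 2 = a ⬝ᵥ a := Real.sq_sqrt (dot_self_nonneg' a)
    have hcs : b ⬝ᵥ a ≤ β * α := le_trans (le_abs_self _) (abs_dot_le b a)
    have hlow2 : lam * β ^ 2 ≤ b ⬝ᵥ a := by rw [hβ2]; exact hlow'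
    nlinarith [sq_nonneg (lam * β - α), Real.sqrt_nonneg (b ⬝ᵥ b), Real.sqrt_nonneg (a ⬝ᵥ a),
      hlam.le, mul_pos hlam hlam]
  -- telescoping and per-term bound
  have hterm : ∀ t ∈ Finset.Icc 1 n, |x t ⬝ᵥ (θ t - θ (n + 1))| ≤ M * D := by
    intro t ht
    obtain ⟨ht1, htn⟩ := Finset.mem_Icc.mp ht
    have htele : θ t - θ (n + 1) = ∑ s ∈ Finset.Icc t n, (θ s - θ (s + 1)) :=
      (telescope_sum θ n t (le_trans htn (Nat.le_succ n))).symm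
    have hdot : x t ⬝ᵥ (θ t - θ (n + 1)) =
        ∑ s ∈ Finset.Icc t n, x t ⬝ᵥ (θ s - θ (s + 1)) := by
      rw [htele]
      simp only [dotProduct, Finset.sum_apply, Finset.mul_sum]
      rw [Finset.sum_comm]
    rw [hdot]
    calc |∑ s ∈ Finset.Icc t n, x t ⬝ᵥ (θ s - θ (s + 1))|
        ≤ ∑ s ∈ Finset.Icc t n, |x t ⬝ᵥ (θ s - θ (s + 1))| := Finset.abs_sum_le_sum_abs _ _
      _ ≤ ∑ s ∈ Finset.Icc t n,
            M * Real.sqrt ((θ s - θ (s + 1)) ⬝ᵥ (θ s - θ (s + 1))) := by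
          refine Finset.sum_le_sum fun s _ => ?_
          refine le_trans (abs_dot_le _ _) ?_
          exact mul_le_mul_of_nonneg_right (hx t) (Real.sqrt_nonneg _)
      _ ≤ ∑ s ∈ Finset.Icc 1 n,
            M * Real.sqrt ((θ s - θ (s + 1)) ⬝ᵥ (θ s - θ (s + 1))) := by
          refine Finset.sum_le_sum_of_subset_of_nonneg ?_ fun s _ _ =>
            mul_nonneg hM (Real.sqrt_nonneg _)
          exact Finset.Icc_subset_Icc_left ht1
      _ = M * D := by rw [hD, Finset.mul_sum]
  -- bound on sum of |c t|
  have hc : ∀ t, |a ⬝ᵥ Z⁻¹ *ᵥ x t| ≤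
      Real.sqrt (a ⬝ᵥ Z⁻¹ *ᵥ a) * Real.sqrt (x t ⬝ᵥ Z⁻¹ *ᵥ x t) := fun t =>
    psd_cauchy hZinvPsd a (x t)
  have hq : ∑ t ∈ Finset.Icc 1 n, Real.sqrt (x t ⬝ᵥ Z⁻¹ *ᵥ x t) ≤
      Real.sqrt n * Real.sqrt d := by
    have hcs := Finset.sum_mul_sq_le_sq_mul_sq (Finset.Icc 1 n)
      (fun _ => (1 : ℝ)) (fun t => Real.sqrt (x t ⬝ᵥ Z⁻¹ *ᵥ x t))
    have hcard : (Finset.Icc 1 n).card = n := by simp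
    have hsq : ∀ t, Real.sqrt (x t ⬝ᵥ Z⁻¹ *ᵥ x t) ^ 2 = x t ⬝ᵥ Z⁻¹ *ᵥ x t := fun t =>
      Real.sq_sqrt (psd_nonneg hZinvPsd (x t))
    have h1 : (∑ t ∈ Finset.Icc 1 n, Real.sqrt (x t ⬝ᵥ Z⁻¹ *ᵥ x t)) ^ 2 ≤
        (n : ℝ) * (d : ℝ) := by
      calc (∑ t ∈ Finset.Icc 1 n, Real.sqrt (x t ⬝ᵥ Z⁻¹ *ᵥ x t)) ^ 2
          ≤ (∑ _t ∈ Finset.Icc 1 n, (1 : ℝ) ^ 2) *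
            ∑ t ∈ Finset.Icc 1 n, Real.sqrt (x t ⬝ᵥ Z⁻¹ *ᵥ x t) ^ 2 := by
            simpa using hcs
        _ = (n : ℝ) * ∑ t ∈ Finset.Icc 1 n, x t ⬝ᵥ Z⁻¹ *ᵥ x t := by
            simp [hsq, hcard]
        _ ≤ (n : ℝ) * d := by
            exact mul_le_mul_of_nonneg_left hsum (Nat.cast_nonneg n)
    calc ∑ t ∈ Finset.Icc 1 n, Real.sqrt (x t ⬝ᵥ Z⁻¹ *ᵥ x t)
        = Real.sqrt ((∑ t ∈ Finset.Icc 1 n, Real.sqrt (x t ⬝ᵥ Z⁻¹ *ᵥ x t)) ^ 2) :=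
          (Real.sqrt_sq (Finset.sum_nonneg fun t _ => Real.sqrt_nonneg _)).symm
      _ ≤ Real.sqrt ((n : ℝ) * d) := Real.sqrt_le_sqrt h1
      _ = Real.sqrt n * Real.sqrt d := Real.sqrt_mul (Nat.cast_nonneg n) _
  have hcsum : ∑ t ∈ Finset.Icc 1 n, |a ⬝ᵥ Z⁻¹ *ᵥ x t| ≤
      Real.sqrt (a ⬝ᵥ a) * Real.sqrt (d * n / lam) := by
    have h1 : ∑ t ∈ Finset.Icc 1 n, |a ⬝ᵥ Z⁻¹ *ᵥ x t| ≤
        Real.sqrt (a ⬝ᵥ Z⁻¹ *ᵥ a) * ∑ t ∈ Finset.Icc 1 n, Real.sqrt (x t ⬝ᵥ Z⁻¹ *ᵥ x t) := by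
      rw [Finset.mul_sum]
      exact Finset.sum_le_sum fun t _ => hc t
    have h2 : Real.sqrt (a ⬝ᵥ Z⁻¹ *ᵥ a) * ∑ t ∈ Finset.Icc 1 n,
        Real.sqrt (x t ⬝ᵥ Z⁻¹ *ᵥ x t) ≤
        Real.sqrt ((a ⬝ᵥ a) / lam) * (Real.sqrt n * Real.sqrt d) := by
      refine mul_le_mul (Real.sqrt_le_sqrt hQA) hq
        (Finset.sum_nonneg fun t _ => Real.sqrt_nonneg _) (Real.sqrt_nonneg _)
    have h3 : Real.sqrt ((a ⬝ᵥ a) / lam) * (Real.sqrt n * Real.sqrt d) =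
        Real.sqrt (a ⬝ᵥ a) * Real.sqrt (d * n / lam) := by
      have harg : (a ⬝ᵥ a) / lam * ((n : ℝ) * d) = (a ⬝ᵥ a) * ((d : ℝ) * n / lam) := by
        ring
      rw [← Real.sqrt_mul (Nat.cast_nonneg n), ← Real.sqrt_mul
        (div_nonneg (dot_self_nonneg' a) hlam.le), harg, Real.sqrt_mul (dot_self_nonneg' a)]
    linarith [h1, h3 ▸ h2]
  -- combine
  calc |∑ t ∈ Finset.Icc 1 n, (a ⬝ᵥ Z⁻¹ *ᵥ x t) * (x t ⬝ᵥ (θ t - θ (n + 1)))|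
      ≤ ∑ t ∈ Finset.Icc 1 n, |(a ⬝ᵥ Z⁻¹ *ᵥ x t) * (x t ⬝ᵥ (θ t - θ (n + 1)))| :=
        Finset.abs_sum_le_sum_abs _ _
    _ = ∑ t ∈ Finset.Icc 1 n, |a ⬝ᵥ Z⁻¹ *ᵥ x t| * |x t ⬝ᵥ (θ t - θ (n + 1))| := by
        simp [abs_mul]
    _ ≤ ∑ t ∈ Finset.Icc 1 n, |a ⬝ᵥ Z⁻¹ *ᵥ x t| * (M * D) := by
        refine Finset.sum_le_sum fun t ht => ?_
        exact mul_le_mul_of_nonneg_left (hterm t ht) (abs_nonneg _)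
    _ = (∑ t ∈ Finset.Icc 1 n, |a ⬝ᵥ Z⁻¹ *ᵥ x t|) * (M * D) := by
        rw [Finset.sum_mul]
    _ ≤ (Real.sqrt (a ⬝ᵥ a) * Real.sqrt (d * n / lam)) * (M * D) :=
        mul_le_mul_of_nonneg_right hcsum (mul_nonneg hM hDnn)
    _ = M * Real.sqrt (a ⬝ᵥ a) * Real.sqrt (d * n / lam) * D := by ring
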